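/- arXiv:2109.13165 — 7 statements merged into one kernel-verified Lean document; each statement's English description precedes it below -/
import Mathlib

section
/- Let M : ℕ → ℕ → ℂ be upper triangular (M a b = 0 whenever b < a), with all diagonal entries nonzero (M a a ≠ 0 for all a) and pairwise distinct (M a a = M b b implies a = b). Fix a ∈ ℕ. Then there exists a unique v : ℕ → ℂ such that v a = 1, v b = 0 for all b > a, and for every r ∈ ℕ, Σ_{b ∈ [r, a]} M r b · v b = M a a · v r (the sum taken over integers b with r ≤ b ≤ a). That is, v is the (finitely supported) eigenvector of M with eigenvalue M a a, normalized so that its a-th component is 1. -/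
open Finset


noncomputable def evec (M : ℕ → ℕ → ℂ) (a : ℕ) : ℕ → ℂ
  | r =>
    if a ≤ r then (if r = a then 1 else 0)
    else (∑ b ∈ (Finset.Icc (r+1) a).attach, M r b.1 * evec M a b.1) / (M a a - M r r)
termination_by r => a - r
decreasing_by
  have hb := Finset.mem_Icc.mp b.2
  omega

lemma evec_lt (M : ℕ → ℕ → ℂ) (a r : ℕ) (h : r < a) :
    evec M a r = (∑ b ∈ Finset.Icc (r+1) a, M r b * evec M a b) / (M a a - M r r) := by
  rw [evec]
  rw [if_neg (by omega)]
  congr 1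
  exact Finset.sum_attach _ (fun b => M r b * evec M a b)

lemma evec_self (M : ℕ → ℕ → ℂ) (a : ℕ) : evec M a a = 1 := by
  rw [evec]; simp

lemma evec_gt (M : ℕ → ℕ → ℂ) (a r : ℕ) (h : a < r) : evec M a r = 0 := by
  rw [evec]; rw [if_pos (by omega), if_neg (by omega)]

/-- An infinite upper triangular matrix with nonzero, pairwise distinct
diagonal entries has, for each `a`, a unique finitely supported eigenvector `v` with
eigenvalue `M a a`, normalized by `v a = 1` and `v b = 0` for `b > a`. -/
theorem eigenvector_exists_unique (M : ℕ → ℕ → ℂ)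
    (htri : ∀ a b : ℕ, b < a → M a b = 0)
    (hne : ∀ a : ℕ, M a a ≠ 0)
    (hdist : ∀ a b : ℕ, M a a = M b b → a = b) (a : ℕ) :
    ∃! v : ℕ → ℂ, v a = 1 ∧ (∀ b : ℕ, a < b → v b = 0) ∧
      ∀ r : ℕ, ∑ b ∈ Finset.Icc r a, M r b * v b = M a a * v r := by
  refine ⟨evec M a, ⟨evec_self M a, fun b hb => evec_gt M a b hb, ?_⟩, ?_⟩
  · intro r
    rcases lt_trichotomy r a with h | h | h
    · have hd : M a a - M r r ≠ 0 := by
        intro hc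
        have : M r r = M a a := by linear_combination -hc
        exact absurd (hdist r a this) (by omega)
      rw [Finset.Icc_eq_cons_Ioc (le_of_lt h), Finset.sum_cons, ← Finset.Icc_add_one_left_eq_Ioc,
        evec_lt M a r h]
      field_simp
      ring
    · subst h
      simp [evec_self]
    · rw [Finset.Icc_eq_empty (by omega), Finset.sum_empty, evec_gt M a r h, mul_zero]
  · rintro v ⟨hva, hv0, hveq⟩
    funext r
    rcases le_or_gt r a with hra | hra
    swap
    · rw [hv0 r hra, evec_gt M a r hra]
    · -- induction on a - r
      have key : ∀ n : ℕ, ∀ r : ℕ, a ≤ r + n → v r = evec M a r := by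
        intro n
        induction n with
        | zero =>
          intro r hr
          rcases eq_or_lt_of_le (by omega : a ≤ r) with h | h
          · subst h; rw [hva, evec_self]
          · rw [hv0 r h, evec_gt M a r h]
        | succ n ih =>
          intro r hr
          rcases le_or_gt a (r + n) with h | h
          · exact ih r h
          · have hrlt : r < a := by omega
            have hd : M a a - M r r ≠ 0 := by
              intro hc
              have : M r r = M a a := by linear_combination -hc
              exact absurd (hdist r a this) (by omega)
            have heq := hveq r
            rw [Finset.Icc_eq_cons_Ioc (le_of_lt hrlt), Finset.sum_cons,
              ← Finset.Icc_add_one_left_eq_Ioc] at heq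
            have hsum : ∑ b ∈ Finset.Icc (r+1) a, M r b * v b
                = ∑ b ∈ Finset.Icc (r+1) a, M r b * evec M a b := by
              apply Finset.sum_congr rfl
              intro b hb
              have hb' := Finset.mem_Icc.mp hb
              rw [ih b (by omega)]
            rw [evec_lt M a r hrlt, ← hsum]
            field_simp
            linear_combination -heq
      exact key (a - r) r (by omega)
end

section
/- Let M : ℕ → ℕ → ℂ be upper triangular (M a b = 0 whenever b < a), with all diagonal entries nonzero and pairwise distinct. Fix a ∈ ℕ, and let v : ℕ → ℂ be the unique vector with v a = 1, v b = 0 for b > a, satisfying Σ_{b ∈ [r, a]} M r b · v b = M a a · v r for all r. Then for every b < a, the component v b equals the sum, over all finite subsets S = {l_1 < l_2 < ⋯ < l_p} of integers strictly between b and a (including the empty set, p = 0), of (−1)^{p+1} times the product ∏_{j=0}^{p} M l_j l_{j+1} / (M l_j l_j − M a a), where the product is taken over the consecutive pairs of the increasing chain b = l_0 < l_1 < ⋯ < l_p < l_{p+1} = a. -/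
open Finset

private noncomputable def cp (M : ℕ → ℕ → ℂ) (a x : ℕ) (L : List ℕ) : ℂ :=
  (((x :: L).zip L).map (fun p => M p.1 p.2 / (M p.1 p.1 - M a a))).prod

private lemma cp_nil (M : ℕ → ℕ → ℂ) (a x : ℕ) : cp M a x [] = 1 := rfl

private lemma cp_cons (M : ℕ → ℕ → ℂ) (a x y : ℕ) (L : List ℕ) :
    cp M a x (y :: L) = (M x y / (M x x - M a a)) * cp M a y L := by
  simp [cp]

private noncomputable def FF (M : ℕ → ℕ → ℂ) (a x : ℕ) (S : Finset ℕ) : ℂ :=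
  (-1) ^ (S.card + 1) * cp M a x (S.sort (· ≤ ·) ++ [a])

private lemma FF_empty (M : ℕ → ℕ → ℂ) (a x : ℕ) :
    FF M a x ∅ = -(M x a / (M x x - M a a)) := by
  simp [FF, cp_cons, cp_nil]

private lemma FF_insert (M : ℕ → ℕ → ℂ) (a c x : ℕ) (S : Finset ℕ)
    (hS : ∀ y ∈ S, c < y) :
    FF M a x (insert c S) = -(M x c / (M x x - M a a)) * FF M a c S := by
  have hc : c ∉ S := fun h => lt_irrefl c (hS c h)
  rw [FF, FF, Finset.card_insert_of_notMem hc,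
      Finset.sort_insert (· ≤ ·) (fun y hy => (hS y hy).le) hc]
  simp only [List.cons_append, cp_cons]
  ring

/-- Back-substitution formula for the components of the eigenvector of
an infinite upper triangular matrix `M` with distinct nonzero diagonal entries
corresponding to eigenvalue `M a a`: for `b < a`,
`v b = ∑_{S = {l₁ < ⋯ < l_p} ⊆ (b, a)} (−1)^{p+1} ∏_{j=0}^{p} M l_j l_{j+1} / (M l_j l_j − M a a)`,
the product running over consecutive pairs of the chain `b = l₀ < l₁ < ⋯ < l_p < l_{p+1} = a`. -/
theorem eigenvector_back_substitution (M : ℕ → ℕ → ℂ)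
    (htri : ∀ a b : ℕ, b < a → M a b = 0)
    (hne : ∀ a : ℕ, M a a ≠ 0)
    (hdist : ∀ a b : ℕ, M a a = M b b → a = b)
    (a : ℕ) (v : ℕ → ℂ) (hva : v a = 1) (hv0 : ∀ b : ℕ, a < b → v b = 0)
    (heig : ∀ r : ℕ, ∑ b ∈ Finset.Icc r a, M r b * v b = M a a * v r) :
    ∀ b : ℕ, b < a →
      v b = ∑ S ∈ (Finset.Ioo b a).powerset,
        (-1 : ℂ) ^ (S.card + 1) *
          (((b :: (S.sort (· ≤ ·) ++ [a])).zip (S.sort (· ≤ ·) ++ [a])).map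
            (fun p => M p.1 p.2 / (M p.1 p.1 - M a a))).prod := by
  suffices H : ∀ n, ∀ b, a - b ≤ n → b < a →
      v b = ∑ S ∈ (Finset.Ioo b a).powerset, FF M a b S by
    intro b hb
    simpa [FF, cp] using H (a - b) b le_rfl hb
  intro n
  induction n with
  | zero => intro b h hb; omega
  | succ n ih =>
    intro b hn hb
    have hΔ : M b b - M a a ≠ 0 := by
      intro h
      have : a = b := hdist a b (by linear_combination -h)
      omega
    -- the eigenvalue equation at row b
    have h1 := heig b
    rw [← Finset.Ioc_insert_left hb.le, Finset.sum_insert (by simp),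
        ← Finset.Ioo_insert_right hb, Finset.sum_insert (by simp), hva] at h1
    have key : (M b b - M a a) * v b
        = -(M b a + ∑ c ∈ Finset.Ioo b a, M b c * v c) := by
      linear_combination h1
    -- split off the empty set
    have hsplit : ∑ S ∈ (Finset.Ioo b a).powerset, FF M a b S
        = FF M a b ∅ + ∑ S ∈ (Finset.Ioo b a).powerset \ {∅}, FF M a b S := by
      rw [Finset.sum_eq_sum_sdiff_singleton_add (Finset.empty_mem_powerset _)]
      ring
    -- bijection between nonempty subsets and (min, rest) pairs
    have hbij : ∑ S ∈ (Finset.Ioo b a).powerset \ {∅}, FF M a b S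
        = ∑ c ∈ Finset.Ioo b a, ∑ S' ∈ (Finset.Ioo c a).powerset,
            FF M a b (insert c S') := by
      rw [Finset.sum_sigma']
      refine Finset.sum_bij'
        (i := fun S hS => (⟨S.min' (Finset.nonempty_iff_ne_empty.2
            (by simpa using (Finset.mem_sdiff.mp hS).2)),
          S.erase (S.min' (Finset.nonempty_iff_ne_empty.2
            (by simpa using (Finset.mem_sdiff.mp hS).2)))⟩ :
          (_ : ℕ) × Finset ℕ))
        (j := fun p _ => insert p.1 p.2) ?_ ?_ ?_ ?_ ?_
      · intro S hS
        obtain ⟨hS1, hS2⟩ := Finset.mem_sdiff.mp hS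
        have hSsub := Finset.mem_powerset.mp hS1
        have hSne : S.Nonempty := Finset.nonempty_iff_ne_empty.2 (by simpa using hS2)
        set m := S.min' hSne with hm
        refine Finset.mem_sigma.mpr ⟨hSsub (S.min'_mem hSne), ?_⟩
        refine Finset.mem_powerset.mpr fun x hx => ?_
        have hx' := Finset.mem_erase.mp hx
        have h1 : m ≤ x := S.min'_le x hx'.2
        have h2 := Finset.mem_Ioo.mp (hSsub hx'.2)
        exact Finset.mem_Ioo.mpr ⟨lt_of_le_of_ne h1 (fun h => hx'.1 h.symm), h2.2⟩
      · intro p hp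
        obtain ⟨hp1, hp2⟩ := Finset.mem_sigma.mp hp
        have hca := Finset.mem_Ioo.mp hp1
        have hsub := Finset.mem_powerset.mp hp2
        refine Finset.mem_sdiff.mpr ⟨Finset.mem_powerset.mpr ?_, by
          simp [Finset.insert_ne_empty]⟩
        intro x hx
        rcases Finset.mem_insert.mp hx with h | h
        · exact h ▸ hp1
        · have := Finset.mem_Ioo.mp (hsub h)
          exact Finset.mem_Ioo.mpr ⟨lt_trans hca.1 this.1, this.2⟩
      · intro S hS
        obtain ⟨hS1, hS2⟩ := Finset.mem_sdiff.mp hS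
        have hSne : S.Nonempty := Finset.nonempty_iff_ne_empty.2 (by simpa using hS2)
        exact Finset.insert_erase (S.min'_mem hSne)
      · intro p hp
        obtain ⟨hp1, hp2⟩ := Finset.mem_sigma.mp hp
        have hsub := Finset.mem_powerset.mp hp2
        have hlt : ∀ y ∈ p.2, p.1 < y := fun y hy => (Finset.mem_Ioo.mp (hsub hy)).1
        have hnm : p.1 ∉ p.2 := fun h => lt_irrefl _ (hlt _ h)
        have hne2 : (insert p.1 p.2).Nonempty := Finset.insert_nonempty _ _
        have hmin : (insert p.1 p.2).min' hne2 = p.1 := by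
          refine le_antisymm (Finset.min'_le _ _ (Finset.mem_insert_self _ _)) ?_
          refine Finset.le_min' _ _ _ fun y hy => ?_
          rcases Finset.mem_insert.mp hy with h | h
          · exact h.ge
          · exact (hlt y h).le
        refine Sigma.ext ?_ ?_
        · simpa using hmin
        · simp only
          rw [show ((insert p.1 p.2).min' _) = p.1 from hmin,
            Finset.erase_insert hnm]
      · intro S hS
        obtain ⟨hS1, hS2⟩ := Finset.mem_sdiff.mp hS
        have hSsub := Finset.mem_powerset.mp hS1
        have hSne : S.Nonempty := Finset.nonempty_iff_ne_empty.2 (by simpa using hS2)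
        simp only
        rw [Finset.insert_erase (S.min'_mem hSne)]
    -- use the induction hypothesis for each inner sum
    have hIH : ∀ c ∈ Finset.Ioo b a,
        ∑ S' ∈ (Finset.Ioo c a).powerset, FF M a b (insert c S')
          = -(M b c / (M b b - M a a)) * v c := by
      intro c hc
      obtain ⟨hbc, hca⟩ := Finset.mem_Ioo.mp hc
      have : ∀ S' ∈ (Finset.Ioo c a).powerset,
          FF M a b (insert c S') = -(M b c / (M b b - M a a)) * FF M a c S' := by
        intro S' hS'
        exact FF_insert M a c b S'
          (fun y hy => (Finset.mem_Ioo.mp (Finset.mem_powerset.mp hS' hy)).1)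
      rw [Finset.sum_congr rfl this, ← Finset.mul_sum,
        ← ih c (by omega) hca]
    rw [hsplit, hbij, Finset.sum_congr rfl hIH, FF_empty]
    have hsum : ∑ c ∈ Finset.Ioo b a, -(M b c / (M b b - M a a)) * v c
        = -((∑ c ∈ Finset.Ioo b a, M b c * v c) / (M b b - M a a)) := by
      calc ∑ c ∈ Finset.Ioo b a, -(M b c / (M b b - M a a)) * v c
          = ∑ c ∈ Finset.Ioo b a, -(M b c * v c / (M b b - M a a)) :=
            Finset.sum_congr rfl fun c _ => by ring
        _ = -∑ c ∈ Finset.Ioo b a, M b c * v c / (M b b - M a a) :=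
            Finset.sum_neg_distrib _
        _ = -((∑ c ∈ Finset.Ioo b a, M b c * v c) / (M b b - M a a)) := by
            rw [Finset.sum_div]
    rw [hsum]
    field_simp
    linear_combination key
end

section
/- Let U : ℕ → ℕ → ℂ be upper triangular (U a b = 0 whenever b < a) with U n n ≠ 0 for all n, and let V be its (two-sided, upper triangular) inverse, i.e. the unique upper triangular matrix with Σ_{k ∈ [i, j]} U i k · V k j = δ_{ij} for all i ≤ j. Then for every i < j, V i j equals (U j j)⁻¹ times the sum, over all finite subsets S = {l_1 < l_2 < ⋯ < l_p} of integers strictly between i and j (including the empty set, p = 0), of (−1)^{p+1} times the product ∏_{t=0}^{p} U l_t l_{t+1} / U l_t l_t, where the product is over consecutive pairs of the increasing chain i = l_0 < l_1 < ⋯ < l_p < l_{p+1} = j. -/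
open Finset

noncomputable def chainP (U : ℕ → ℕ → ℂ) : ℕ → List ℕ → ℂ
  | _, [] => 1
  | a, b :: l => (U a b / U a a) * chainP U b l

lemma chainP_eq (U : ℕ → ℕ → ℂ) : ∀ (l : List ℕ) (a : ℕ),
    (((a :: l).zip l).map (fun p => U p.1 p.2 / U p.1 p.1)).prod = chainP U a l := by
  intro l
  induction l with
  | nil => intro a; simp [chainP]
  | cons b t ih => intro a; simp [chainP, ih b]

noncomputable def G (U : ℕ → ℕ → ℂ) (i j : ℕ) : ℂ :=
  ∑ S ∈ (Finset.Ioo i j).powerset,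
    (-1 : ℂ) ^ (S.card + 1) * chainP U i (S.sort (· ≤ ·) ++ [j])

lemma G_rec (U : ℕ → ℕ → ℂ) (i j : ℕ) (hij : i < j) :
    G U i j = -(U i j / U i i) - ∑ k ∈ Finset.Ioo i j, (U i k / U i i) * G U k j := by
  classical
  have hempty : (∅ : Finset ℕ) ∈ (Finset.Ioo i j).powerset := by simp
  rw [G, ← Finset.add_sum_erase _ _ hempty]
  have h1 : ((-1 : ℂ)) ^ ((∅ : Finset ℕ).card + 1) *
      chainP U i ((∅ : Finset ℕ).sort (· ≤ ·) ++ [j]) = -(U i j / U i i) := by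
    simp [chainP]
  rw [h1]
  have h2 : ∑ p ∈ (Finset.Ioo i j).sigma (fun k => (Finset.Ioo k j).powerset),
        (-(U i p.1 / U i i)) * ((-1 : ℂ) ^ (p.2.card + 1) *
          chainP U p.1 (p.2.sort (· ≤ ·) ++ [j]))
      = ∑ S ∈ ((Finset.Ioo i j).powerset).erase ∅,
        (-1 : ℂ) ^ (S.card + 1) * chainP U i (S.sort (· ≤ ·) ++ [j]) := by
    refine Finset.sum_nbij' (fun p => insert p.1 p.2)
      (fun S => if h : S.Nonempty then ⟨S.min' h, S.erase (S.min' h)⟩ else ⟨0, ∅⟩)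
      ?_ ?_ ?_ ?_ ?_
    · rintro ⟨k, S'⟩ hp
      simp only [Finset.mem_sigma, Finset.mem_powerset] at hp
      obtain ⟨hk, hS'⟩ := hp
      simp only [Finset.mem_erase, Finset.mem_powerset]
      constructor
      · exact (Finset.insert_nonempty _ _).ne_empty
      · intro x hx
        rcases Finset.mem_insert.1 hx with rfl | hx
        · exact hk
        · have := hS' hx
          exact Finset.mem_Ioo.2 ⟨lt_trans (Finset.mem_Ioo.1 hk).1 (Finset.mem_Ioo.1 this).1,
            (Finset.mem_Ioo.1 this).2⟩
    · intro S hS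
      simp only [Finset.mem_erase, Finset.mem_powerset] at hS
      obtain ⟨hne', hsub⟩ := hS
      have hS : S.Nonempty := Finset.nonempty_iff_ne_empty.2 hne'
      simp only [dif_pos hS]
      simp only [Finset.mem_sigma, Finset.mem_powerset]
      have hmin : S.min' hS ∈ S := S.min'_mem hS
      refine ⟨hsub hmin, ?_⟩
      intro x hx
      rcases Finset.mem_erase.1 hx with ⟨hxne, hxS⟩
      have := hsub hxS
      exact Finset.mem_Ioo.2 ⟨lt_of_le_of_ne (S.min'_le x hxS) (Ne.symm hxne),
        (Finset.mem_Ioo.1 this).2⟩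
    · rintro ⟨k, S'⟩ hp
      simp only [Finset.mem_sigma, Finset.mem_powerset] at hp
      obtain ⟨hk, hS'⟩ := hp
      have hknotin : k ∉ S' := fun h => lt_irrefl k (Finset.mem_Ioo.1 (hS' h)).1
      have hne2 : (insert k S').Nonempty := Finset.insert_nonempty _ _
      have hmin : (insert k S').min' hne2 = k := by
        apply le_antisymm
        · exact Finset.min'_le _ _ (Finset.mem_insert_self _ _)
        · apply Finset.le_min'
          intro y hy
          rcases Finset.mem_insert.1 hy with rfl | hy
          · exact le_refl _
          · exact le_of_lt (Finset.mem_Ioo.1 (hS' hy)).1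
      simp only [dif_pos hne2]
      refine Sigma.ext hmin ?_
      rw [hmin]
      simp [Finset.erase_insert hknotin]
    · intro S hS
      simp only [Finset.mem_erase, Finset.mem_powerset] at hS
      have hS' : S.Nonempty := Finset.nonempty_iff_ne_empty.2 hS.1
      simp only [dif_pos hS']
      exact Finset.insert_erase (S.min'_mem hS')
    · rintro ⟨k, S'⟩ hp
      simp only [Finset.mem_sigma, Finset.mem_powerset] at hp
      obtain ⟨hk, hS'⟩ := hp
      have hknotin : k ∉ S' := fun h => lt_irrefl k (Finset.mem_Ioo.1 (hS' h)).1
      have hsort : (insert k S').sort (· ≤ ·) = k :: S'.sort (· ≤ ·) :=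
        Finset.sort_insert _ (fun b hb => le_of_lt (Finset.mem_Ioo.1 (hS' hb)).1) hknotin
      have hcard : (insert k S').card = S'.card + 1 := Finset.card_insert_of_notMem hknotin
      simp only [hsort, hcard, List.cons_append]
      show -(U i k / U i i) * ((-1 : ℂ) ^ (S'.card + 1) * chainP U k (S'.sort (· ≤ ·) ++ [j]))
        = (-1 : ℂ) ^ (S'.card + 1 + 1) *
            ((U i k / U i i) * chainP U k (S'.sort (· ≤ ·) ++ [j]))
      ring
  rw [← h2, Finset.sum_sigma]
  rw [sub_eq_add_neg, ← Finset.sum_neg_distrib]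
  congr 1
  apply Finset.sum_congr rfl
  intro k _
  rw [G, Finset.mul_sum, ← Finset.sum_neg_distrib]
  apply Finset.sum_congr rfl
  intro S' _
  ring

/-- Explicit formula for the entries of the (upper triangular) inverse
`V` of an infinite upper triangular matrix `U` with nonzero diagonal: for `i < j`,
`V i j = (U j j)⁻¹ ∑_{S = {l₁ < ⋯ < l_p} ⊆ (i, j)} (−1)^{p+1} ∏_{t=0}^{p} U l_t l_{t+1} / U l_t l_t`,
the product running over consecutive pairs of the chain `i = l₀ < l₁ < ⋯ < l_p < l_{p+1} = j`. -/
theorem upper_triangular_inverse_entries (U V : ℕ → ℕ → ℂ)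
    (htriU : ∀ a b : ℕ, b < a → U a b = 0)
    (hne : ∀ n : ℕ, U n n ≠ 0)
    (htriV : ∀ a b : ℕ, b < a → V a b = 0)
    (hinv : ∀ i j : ℕ, i ≤ j →
      ∑ k ∈ Finset.Icc i j, U i k * V k j = if i = j then 1 else 0) :
    ∀ i j : ℕ, i < j →
      V i j = (U j j)⁻¹ *
        ∑ S ∈ (Finset.Ioo i j).powerset,
          (-1 : ℂ) ^ (S.card + 1) *
            (((i :: (S.sort (· ≤ ·) ++ [j])).zip (S.sort (· ≤ ·) ++ [j])).map
              (fun p => U p.1 p.2 / U p.1 p.1)).prod := by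
  classical
  have hVdiag : ∀ j : ℕ, V j j = (U j j)⁻¹ := by
    intro j
    have h := hinv j j le_rfl
    simp only [Finset.Icc_self, Finset.sum_singleton, if_pos rfl, if_true] at h
    field_simp [hne j] at h ⊢
    linear_combination h
  have main : ∀ d i j : ℕ, i < j → j - i ≤ d → V i j = (U j j)⁻¹ * G U i j := by
    intro d
    induction d with
    | zero => intro i j hij hd; omega
    | succ d ih =>
      intro i j hij hd
      have h0 := hinv i j (le_of_lt hij)
      rw [if_neg (ne_of_lt hij)] at h0
      rw [← Finset.Ioc_insert_left (le_of_lt hij), Finset.sum_insert (by simp)] at h0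
      rw [← Finset.Ioo_insert_right hij, Finset.sum_insert (by simp)] at h0
      rw [hVdiag j] at h0
      have hsum : ∑ k ∈ Finset.Ioo i j, U i k * V k j
          = ∑ k ∈ Finset.Ioo i j, U i k * ((U j j)⁻¹ * G U k j) := by
        apply Finset.sum_congr rfl
        intro k hk
        rcases Finset.mem_Ioo.1 hk with ⟨h1, h2⟩
        rw [ih k j h2 (by omega)]
      rw [hsum] at h0
      have hstep : V i j = (U i i)⁻¹ *
          (-(∑ k ∈ Finset.Ioo i j, U i k * ((U j j)⁻¹ * G U k j)) - U i j * (U j j)⁻¹) := by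
        have hUV : U i i * V i j
            = -(∑ k ∈ Finset.Ioo i j, U i k * ((U j j)⁻¹ * G U k j)) - U i j * (U j j)⁻¹ := by
          linear_combination h0
        rw [← hUV, inv_mul_cancel_left₀ (hne i)]
      rw [hstep, G_rec U i j hij, mul_sub, mul_neg, Finset.mul_sum,
        mul_sub, mul_neg, Finset.mul_sum]
      have hc : ∑ k ∈ Finset.Ioo i j, (U i i)⁻¹ * (U i k * ((U j j)⁻¹ * G U k j))
          = ∑ k ∈ Finset.Ioo i j, (U j j)⁻¹ * (U i k / U i i * G U k j) :=
        Finset.sum_congr rfl (fun k _ => by ring)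
      rw [hc]
      ring
  intro i j hij
  have hGoal : (∑ S ∈ (Finset.Ioo i j).powerset,
      (-1 : ℂ) ^ (S.card + 1) *
        (((i :: (S.sort (· ≤ ·) ++ [j])).zip (S.sort (· ≤ ·) ++ [j])).map
          (fun p => U p.1 p.2 / U p.1 p.1)).prod) = G U i j := by
    rw [G]
    apply Finset.sum_congr rfl
    intro S _
    rw [chainP_eq]
  rw [hGoal]
  exact main (j - i) i j hij le_rfl
end

section
/- Let F be a polynomial over ℂ with F.coeff 0 = 0, let c₁ = F.coeff 1, and assume the powers of c₁ are pairwise distinct (for all m, n ∈ ℕ, c₁^m = c₁^n implies m = n). Let T a b = coefficient of X^b in F^a be the Carleman transition matrix of F, and define the iterates F^{∘0} = X, F^{∘(i+1)} = F^{∘i} ∘ F. Then there exist upper triangular matrices P, Q : ℕ → ℕ → ℂ with P n n = 1 and Q n n = 1 for all n, such that: (i) Q is the inverse of P, i.e. Σ_{k ∈ [i, j]} P i k · Q k j = δ_{ij} for all i ≤ j; (ii) the columns of P are eigenvectors of T: for all r ≤ j, Σ_{b ∈ [r, j]} T r b · P b j = c₁^j · P r j; and (iii) for every i ∈ ℕ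 and every l ≥ 1, the coefficient of X^l in the i-th iterate F^{∘i} equals Σ_{j=1}^{l} P 1 j · c₁^{i·j} · Q j l. -/
open Finset


noncomputable def Pm (T : ℕ → ℕ → ℂ) (c : ℂ) (r j : ℕ) : ℂ :=
  if h : r < j then
    (∑ b ∈ (Finset.Icc (r+1) j).attach, T r b.1 * Pm T c b.1 j) / (c ^ j - c ^ r)
  else if r = j then 1 else 0
termination_by j - r
decreasing_by
  have hb := b.2
  simp only [Finset.mem_Icc] at hb
  omega

noncomputable def Qm (T : ℕ → ℕ → ℂ) (c : ℂ) (j l : ℕ) : ℂ :=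
  if h : j < l then
    (∑ m ∈ (Finset.Icc j (l-1)).attach, Qm T c j m.1 * T m.1 l) / (c ^ j - c ^ l)
  else if j = l then 1 else 0
termination_by l
decreasing_by
  have hm := m.2
  simp only [Finset.mem_Icc] at hm
  omega

lemma Pm_zero (T : ℕ → ℕ → ℂ) (c : ℂ) {r j : ℕ} (h : j < r) : Pm T c r j = 0 := by
  rw [Pm]; rw [dif_neg (by omega), if_neg (by omega)]

lemma Pm_diag (T : ℕ → ℕ → ℂ) (c : ℂ) (n : ℕ) : Pm T c n n = 1 := by
  rw [Pm]; simp

lemma Pm_eq (T : ℕ → ℕ → ℂ) (c : ℂ) {r j : ℕ} (h : r < j) :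
    Pm T c r j = (∑ b ∈ Finset.Icc (r+1) j, T r b * Pm T c b j) / (c ^ j - c ^ r) := by
  rw [Pm, dif_pos h]
  congr 1
  exact Finset.sum_attach _ fun b => T r b * Pm T c b j

lemma Qm_zero (T : ℕ → ℕ → ℂ) (c : ℂ) {j l : ℕ} (h : l < j) : Qm T c j l = 0 := by
  rw [Qm]; rw [dif_neg (by omega), if_neg (by omega)]

lemma Qm_diag (T : ℕ → ℕ → ℂ) (c : ℂ) (n : ℕ) : Qm T c n n = 1 := by
  rw [Qm]; simp

lemma Qm_eq (T : ℕ → ℕ → ℂ) (c : ℂ) {j l : ℕ} (h : j < l) :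
    Qm T c j l = (∑ m ∈ Finset.Icc j (l-1), Qm T c j m * T m l) / (c ^ j - c ^ l) := by
  rw [Qm, dif_pos h]
  congr 1
  exact Finset.sum_attach _ fun m => Qm T c j m * T m l

lemma triangle_swap (a b : ℕ) (f : ℕ → ℕ → ℂ)
    (hf : ∀ k m, k ∈ Finset.Icc a b → m ∈ Finset.Icc a b → m < k → f k m = 0) :
    ∑ k ∈ Finset.Icc a b, ∑ m ∈ Finset.Icc k b, f k m
      = ∑ m ∈ Finset.Icc a b, ∑ k ∈ Finset.Icc a m, f k m := by
  have h1 : ∑ k ∈ Finset.Icc a b, ∑ m ∈ Finset.Icc k b, f k m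
      = ∑ k ∈ Finset.Icc a b, ∑ m ∈ Finset.Icc a b, f k m := by
    apply Finset.sum_congr rfl
    intro k hk
    simp only [Finset.mem_Icc] at hk
    apply Finset.sum_subset
    · intro m hm; simp only [Finset.mem_Icc] at *; omega
    · intro m hm hm'
      simp only [Finset.mem_Icc] at hm hm'
      exact hf k m (by simp [Finset.mem_Icc]; omega) (by simp [Finset.mem_Icc]; omega) (by omega)
  have h2 : ∑ m ∈ Finset.Icc a b, ∑ k ∈ Finset.Icc a m, f k m
      = ∑ m ∈ Finset.Icc a b, ∑ k ∈ Finset.Icc a b, f k m := by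
    apply Finset.sum_congr rfl
    intro m hm
    simp only [Finset.mem_Icc] at hm
    apply Finset.sum_subset
    · intro k hk; simp only [Finset.mem_Icc] at *; omega
    · intro k hk hk'
      simp only [Finset.mem_Icc] at hk hk'
      exact hf k m (by simp [Finset.mem_Icc]; omega) (by simp [Finset.mem_Icc]; omega) (by omega)
  rw [h1, h2, Finset.sum_comm]

/-- Diagonalization of the Carleman transition matrix and the solution
of a uni-variable depth-one polynomial recurrence: if `F.coeff 0 = 0` and the powers of
`c₁ = F.coeff 1` are pairwise distinct, then there are upper triangular unitriangular
matrices `P` (modal matrix of eigenvectors of `T`) and `Q = P⁻¹` such that the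
coefficients of the iterates of `F` satisfy
`(F^{∘i}).coeff l = ∑_{j=1}^{l} P 1 j · c₁^{i·j} · Q j l` for `l ≥ 1`. -/
theorem carleman_diagonalization_solves_recurrence (F : Polynomial ℂ)
    (h0 : F.coeff 0 = 0) (c₁ : ℂ) (hc₁ : c₁ = F.coeff 1)
    (hdist : ∀ m n : ℕ, c₁ ^ m = c₁ ^ n → m = n)
    (T : ℕ → ℕ → ℂ) (hT : ∀ a b : ℕ, T a b = (F ^ a).coeff b)
    (Fiter : ℕ → Polynomial ℂ) (hFiter0 : Fiter 0 = Polynomial.X)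
    (hFiterS : ∀ i : ℕ, Fiter (i + 1) = (Fiter i).comp F) :
    ∃ P Q : ℕ → ℕ → ℂ,
      (∀ a b : ℕ, b < a → P a b = 0) ∧
      (∀ a b : ℕ, b < a → Q a b = 0) ∧
      (∀ n : ℕ, P n n = 1) ∧
      (∀ n : ℕ, Q n n = 1) ∧
      (∀ i j : ℕ, i ≤ j →
        ∑ k ∈ Finset.Icc i j, P i k * Q k j = if i = j then 1 else 0) ∧
      (∀ r j : ℕ, r ≤ j →
        ∑ b ∈ Finset.Icc r j, T r b * P b j = c₁ ^ j * P r j) ∧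
      (∀ i l : ℕ, 1 ≤ l →
        (Fiter i).coeff l = ∑ j ∈ Finset.Icc 1 l, P 1 j * c₁ ^ (i * j) * Q j l) := by
  have hne : ∀ {r j : ℕ}, r ≠ j → c₁ ^ j - c₁ ^ r ≠ 0 := by
    intro r j h
    exact sub_ne_zero.mpr fun he => h (hdist _ _ he).symm
  have Tzero : ∀ a b : ℕ, b < a → T a b = 0 := by
    intro a b hb
    rw [hT]
    have hd : Polynomial.X ∣ F := Polynomial.X_dvd_iff.mpr h0
    exact (Polynomial.X_pow_dvd_iff.mp (pow_dvd_pow_of_dvd hd a)) b hb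
  have hFX : F = Polynomial.X * F.divX := by
    have h := Polynomial.X_mul_divX_add F
    rw [h0, map_zero, add_zero] at h
    exact h.symm
  have Tdiag : ∀ a : ℕ, T a a = c₁ ^ a := by
    intro a
    rw [hT]
    conv_lhs => rw [hFX]
    rw [mul_pow]
    have h := Polynomial.coeff_X_pow_mul (F.divX ^ a) a 0
    rw [zero_add] at h
    rw [h, Polynomial.coeff_zero_eq_eval_zero, Polynomial.eval_pow,
      ← Polynomial.coeff_zero_eq_eval_zero, Polynomial.coeff_divX, hc₁]
  set P := Pm T c₁ with hP
  set Q := Qm T c₁ with hQ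
  -- eigenvector relations
  have eigP : ∀ r j : ℕ, r ≤ j → ∑ b ∈ Finset.Icc r j, T r b * P b j = c₁ ^ j * P r j := by
    intro r j hrj
    rcases eq_or_lt_of_le hrj with rfl | h
    · simp [Finset.Icc_self, Tdiag, hP, Pm_diag]
    · have hins : Finset.Icc r j = insert r (Finset.Icc (r+1) j) := by
        ext x; simp only [Finset.mem_Icc, Finset.mem_insert]; omega
      rw [hins, Finset.sum_insert (by simp [Finset.mem_Icc])]
      rw [Tdiag]
      have hd : c₁ ^ j - c₁ ^ r ≠ 0 := hne (Nat.ne_of_lt h)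
      have heq : P r j = (∑ b ∈ Finset.Icc (r+1) j, T r b * P b j) / (c₁ ^ j - c₁ ^ r) :=
        Pm_eq T c₁ h
      rw [heq]
      field_simp
      ring
  have eigQ : ∀ j l : ℕ, j ≤ l → ∑ m ∈ Finset.Icc j l, Q j m * T m l = c₁ ^ j * Q j l := by
    intro j l hjl
    rcases eq_or_lt_of_le hjl with rfl | h
    · simp [Finset.Icc_self, Tdiag, hQ, Qm_diag]
    · have hins : Finset.Icc j l = insert l (Finset.Icc j (l-1)) := by
        ext x; simp only [Finset.mem_Icc, Finset.mem_insert]; omega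
      rw [hins, Finset.sum_insert (by simp [Finset.mem_Icc]; omega)]
      rw [Tdiag]
      have hd : c₁ ^ j - c₁ ^ l ≠ 0 := hne (by omega)
      have heq : Q j l = (∑ m ∈ Finset.Icc j (l-1), Q j m * T m l) / (c₁ ^ j - c₁ ^ l) :=
        Qm_eq T c₁ h
      rw [heq]
      field_simp
      ring
  -- the two triple-product computations
  have comm1 : ∀ i j : ℕ, i ≤ j →
      ∑ k ∈ Finset.Icc i j, T i k * (∑ m ∈ Finset.Icc k j, P k m * Q m j)
        = ∑ m ∈ Finset.Icc i j, c₁ ^ m * P i m * Q m j := by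
    intro i j hij
    have h1 : ∀ k, T i k * (∑ m ∈ Finset.Icc k j, P k m * Q m j)
        = ∑ m ∈ Finset.Icc k j, T i k * P k m * Q m j := by
      intro k; rw [Finset.mul_sum]; exact Finset.sum_congr rfl fun m _ => by ring
    simp only [h1]
    rw [triangle_swap i j _ (fun k m _ _ hmk => by
      simp [hP, Pm_zero T c₁ hmk])]
    apply Finset.sum_congr rfl
    intro m hm
    simp only [Finset.mem_Icc] at hm
    rw [show (∑ k ∈ Finset.Icc i m, T i k * P k m * Q m j)
        = (∑ k ∈ Finset.Icc i m, T i k * P k m) * Q m j by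
      rw [Finset.sum_mul]]
    rw [eigP i m hm.1]
  have comm2 : ∀ i j : ℕ, i ≤ j →
      ∑ k ∈ Finset.Icc i j, (∑ m ∈ Finset.Icc i k, P i m * Q m k) * T k j
        = ∑ m ∈ Finset.Icc i j, c₁ ^ m * P i m * Q m j := by
    intro i j hij
    have h1 : ∀ k, (∑ m ∈ Finset.Icc i k, P i m * Q m k) * T k j
        = ∑ m ∈ Finset.Icc i k, P i m * Q m k * T k j := by
      intro k; rw [Finset.sum_mul]
    simp only [h1]
    have hswap := triangle_swap i j (fun x y => P i x * Q x y * T y j) (fun x y _ _ hyx => by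
      simp [hQ, Qm_zero T c₁ hyx])
    rw [← hswap]
    apply Finset.sum_congr rfl
    intro x hx
    simp only [Finset.mem_Icc] at hx
    rw [show (∑ y ∈ Finset.Icc x j, P i x * Q x y * T y j)
        = P i x * (∑ y ∈ Finset.Icc x j, Q x y * T y j) by
      rw [Finset.mul_sum]; exact Finset.sum_congr rfl fun y _ => by ring]
    rw [eigQ x j hx.2]
    ring
  -- PQ = I
  have key : ∀ d i j : ℕ, i ≤ j → j - i ≤ d →
      ∑ k ∈ Finset.Icc i j, P i k * Q k j = if i = j then 1 else 0 := by
    intro d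
    induction d with
    | zero =>
      intro i j hij hd
      have : i = j := by omega
      subst this
      simp [Finset.Icc_self, hP, hQ, Pm_diag, Qm_diag]
    | succ d ih =>
      intro i j hij hd
      rcases eq_or_lt_of_le hij with rfl | h
      · simp [Finset.Icc_self, hP, hQ, Pm_diag, Qm_diag]
      · rw [if_neg (by omega)]
        have hij' : i ≤ j := le_of_lt h
        have e1 : ∑ k ∈ Finset.Icc i j, T i k * (∑ m ∈ Finset.Icc k j, P k m * Q m j)
            = c₁ ^ i * (∑ k ∈ Finset.Icc i j, P i k * Q k j) + T i j := by
          have hins : Finset.Icc i j = insert i (Finset.Icc (i+1) j) := by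
            ext x; simp only [Finset.mem_Icc, Finset.mem_insert]; omega
          rw [hins, Finset.sum_insert (by simp [Finset.mem_Icc])]
          rw [Tdiag, ← hins]
          congr 1
          have hterm : ∀ k ∈ Finset.Icc (i+1) j,
              T i k * (∑ m ∈ Finset.Icc k j, P k m * Q m j)
                = T i k * (if k = j then 1 else 0) := by
            intro k hk
            simp only [Finset.mem_Icc] at hk
            rw [ih k j hk.2 (by omega)]
          rw [Finset.sum_congr rfl hterm]
          rw [Finset.sum_eq_single j]
          · rw [if_pos rfl, mul_one]
          · intro b _ hb; rw [if_neg hb, mul_zero]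
          · intro hj; exact absurd (by simp [Finset.mem_Icc]; omega) hj
        have e2 : ∑ k ∈ Finset.Icc i j, (∑ m ∈ Finset.Icc i k, P i m * Q m k) * T k j
            = T i j + (∑ k ∈ Finset.Icc i j, P i k * Q k j) * c₁ ^ j := by
          have hins : Finset.Icc i j = insert j (Finset.Icc i (j-1)) := by
            ext x; simp only [Finset.mem_Icc, Finset.mem_insert]; omega
          rw [hins, Finset.sum_insert (by simp [Finset.mem_Icc]; omega)]
          rw [Tdiag, ← hins, add_comm]
          congr 1
          have hterm : ∀ k ∈ Finset.Icc i (j-1),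
              (∑ m ∈ Finset.Icc i k, P i m * Q m k) * T k j
                = (if i = k then 1 else 0) * T k j := by
            intro k hk
            simp only [Finset.mem_Icc] at hk
            rw [ih i k hk.1 (by omega)]
          rw [Finset.sum_congr rfl hterm]
          rw [Finset.sum_eq_single i]
          · rw [if_pos rfl, one_mul]
          · intro b _ hb; rw [if_neg (Ne.symm hb), zero_mul]
          · intro hi; exact absurd (by simp [Finset.mem_Icc]; omega) hi
        have e3 : c₁ ^ i * (∑ k ∈ Finset.Icc i j, P i k * Q k j) + T i j
            = T i j + (∑ k ∈ Finset.Icc i j, P i k * Q k j) * c₁ ^ j := by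
          rw [← e1, ← e2, comm1 i j hij', comm2 i j hij']
        have e4 : (∑ k ∈ Finset.Icc i j, P i k * Q k j) * (c₁ ^ i - c₁ ^ j) = 0 := by
          linear_combination e3
        rcases mul_eq_zero.mp e4 with h' | h'
        · exact h'
        · exact absurd h' (by have := hne (show j ≠ i by omega); exact this)
  have inv : ∀ i j : ℕ, i ≤ j →
      ∑ k ∈ Finset.Icc i j, P i k * Q k j = if i = j then 1 else 0 :=
    fun i j hij => key (j - i) i j hij le_rfl
  -- composition coefficient formula
  have T0 : ∀ l : ℕ, 1 ≤ l → T 0 l = 0 := by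
    intro l hl
    rw [hT, pow_zero, Polynomial.coeff_one]
    simp; omega
  have comp_coeff : ∀ (p : Polynomial ℂ) (l : ℕ), 1 ≤ l →
      (p.comp F).coeff l = ∑ m ∈ Finset.Icc 1 l, p.coeff m * T m l := by
    intro p l hl
    have h1 : (p.comp F).coeff l = ∑ m ∈ p.support, p.coeff m * T m l := by
      rw [Polynomial.comp_eq_sum_left, Polynomial.sum_def, Polynomial.finset_sum_coeff]
      apply Finset.sum_congr rfl
      intro m _
      rw [Polynomial.coeff_C_mul, hT]
    rw [h1]
    have h2 : ∑ m ∈ p.support, p.coeff m * T m l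
        = ∑ m ∈ p.support ∪ Finset.Icc 1 l, p.coeff m * T m l := by
      apply Finset.sum_subset Finset.subset_union_left
      intro m _ hm
      rw [Polynomial.notMem_support_iff.mp hm, zero_mul]
    have h3 : ∑ m ∈ Finset.Icc 1 l, p.coeff m * T m l
        = ∑ m ∈ p.support ∪ Finset.Icc 1 l, p.coeff m * T m l := by
      apply Finset.sum_subset Finset.subset_union_right
      intro m _ hm
      simp only [Finset.mem_Icc, not_and_or, not_le] at hm
      rcases hm with hm | hm
      · interval_cases m
        rw [T0 l hl, mul_zero]
      · rw [Tzero m l hm, mul_zero]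
    rw [h2, ← h3]
  refine ⟨P, Q, fun a b hb => Pm_zero T c₁ hb, fun a b hb => Qm_zero T c₁ hb,
    fun n => Pm_diag T c₁ n, fun n => Qm_diag T c₁ n, inv, eigP, ?_⟩
  intro i
  induction i with
  | zero =>
    intro l hl
    rw [hFiter0, Polynomial.coeff_X]
    have h := inv 1 l hl
    rw [show (∑ j ∈ Finset.Icc 1 l, P 1 j * c₁ ^ (0 * j) * Q j l)
        = ∑ j ∈ Finset.Icc 1 l, P 1 j * Q j l by
      apply Finset.sum_congr rfl; intro j _; rw [Nat.zero_mul, pow_zero]; ring]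
    rw [h]
  | succ i ih =>
    intro l hl
    rw [hFiterS, comp_coeff (Fiter i) l hl]
    have h1 : ∀ m ∈ Finset.Icc 1 l,
        (Fiter i).coeff m * T m l
          = ∑ j ∈ Finset.Icc 1 m, P 1 j * c₁ ^ (i * j) * Q j m * T m l := by
      intro m hm
      simp only [Finset.mem_Icc] at hm
      rw [ih m hm.1, Finset.sum_mul]
    rw [Finset.sum_congr rfl h1]
    have hswap := triangle_swap 1 l (fun j m => P 1 j * c₁ ^ (i * j) * Q j m * T m l)
      (fun j m _ _ hmj => by simp [hQ, Qm_zero T c₁ hmj])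
    rw [← hswap]
    apply Finset.sum_congr rfl
    intro j hj
    simp only [Finset.mem_Icc] at hj
    rw [show (∑ m ∈ Finset.Icc j l, P 1 j * c₁ ^ (i * j) * Q j m * T m l)
        = P 1 j * c₁ ^ (i * j) * ∑ m ∈ Finset.Icc j l, Q j m * T m l by
      rw [Finset.mul_sum]; exact Finset.sum_congr rfl fun m _ => by ring]
    rw [eigQ j l hj.2]
    rw [show (i + 1) * j = i * j + j by ring, pow_add]
    ring
end

section
/- Let r ∈ ℂ and let F = r·X − r·X² be the logistic polynomial, with iterates F^{∘0} = X and F^{∘(i+1)} = F^{∘i} ∘ F. Then for every i ∈ ℕ: (1) the coefficient of X in F^{∘i} equals r^i; (2) if r ≠ 1, the coefficient of X² in F^{∘i} equals (r^i − r^{2i})/(r − 1); (3) if moreover r ≠ −1, the coefficient of X³ in F^{∘i} equals (2r·r^i − 2(r+1)·r^{2i} + 2·r^{3i})/(r³ − r² − r + 1). -/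
open Polynomial Finset

lemma aux_coeff_comp (p q : Polynomial ℂ) (hq : q.coeff 0 = 0) (n : ℕ) :
    (p.comp q).coeff n = ∑ e ∈ Finset.range (n + 1), p.coeff e * (q ^ e).coeff n := by
  classical
  have key : ∀ e, n < e → (q ^ e).coeff n = 0 := by
    intro e he
    have hd : (X : Polynomial ℂ) ^ e ∣ q ^ e :=
      pow_dvd_pow_of_dvd (Polynomial.X_dvd_iff.mpr hq) e
    exact (Polynomial.X_pow_dvd_iff.mp hd) n he
  rw [Polynomial.comp_eq_sum_left, Polynomial.coeff_sum]
  simp only [Polynomial.coeff_C_mul]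
  rw [Polynomial.sum_def]
  have h1 : ∑ e ∈ p.support, p.coeff e * (q ^ e).coeff n
      = ∑ e ∈ p.support ∪ Finset.range (n + 1), p.coeff e * (q ^ e).coeff n := by
    apply Finset.sum_subset Finset.subset_union_left
    intro x _ hx
    rw [Polynomial.notMem_support_iff.mp hx, zero_mul]
  have h2 : ∑ e ∈ Finset.range (n + 1), p.coeff e * (q ^ e).coeff n
      = ∑ e ∈ p.support ∪ Finset.range (n + 1), p.coeff e * (q ^ e).coeff n := by
    apply Finset.sum_subset Finset.subset_union_right
    intro x _ hx
    rw [key x (by simpa using hx), mul_zero]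
  rw [h1, ← h2]

/-- First three coefficient functions of the iterates of the logistic
polynomial `F = r·X − r·X²`: the coefficient of `X` in `F^{∘i}` is `r^i`; for `r ≠ 1`,
the coefficient of `X²` is `(r^i − r^{2i})/(r − 1)`; and for `r ≠ 1`, `r ≠ −1`, the
coefficient of `X³` is `(2r·r^i − 2(r+1)·r^{2i} + 2·r^{3i})/(r³ − r² − r + 1)`. -/
theorem logistic_iterate_coefficients (r : ℂ) (F : Polynomial ℂ)
    (hF : F = Polynomial.C r * Polynomial.X - Polynomial.C r * Polynomial.X ^ 2)
    (Fiter : ℕ → Polynomial ℂ) (h0 : Fiter 0 = Polynomial.X)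
    (hS : ∀ i : ℕ, Fiter (i + 1) = (Fiter i).comp F) :
    ∀ i : ℕ,
      (Fiter i).coeff 1 = r ^ i ∧
      (r ≠ 1 → (Fiter i).coeff 2 = (r ^ i - r ^ (2 * i)) / (r - 1)) ∧
      (r ≠ 1 → r ≠ -1 →
        (Fiter i).coeff 3 =
          (2 * r * r ^ i - 2 * (r + 1) * r ^ (2 * i) + 2 * r ^ (3 * i)) /
            (r ^ 3 - r ^ 2 - r + 1)) := by
  have hF0 : F.coeff 0 = 0 := by simp [hF]
  have hF1 : F.coeff 1 = r := by simp [hF]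
  have hF2c : F.coeff 2 = -r := by simp [hF]
  have hF3c : F.coeff 3 = 0 := by simp [hF, Polynomial.coeff_X]
  have hF2 : F ^ 2 = C (r ^ 2) * X ^ 2 - C (2 * r ^ 2) * X ^ 3 + C (r ^ 2) * X ^ 4 := by
    rw [hF]; simp only [map_mul, map_pow, map_ofNat]; ring
  have hF3 : F ^ 3 = C (r ^ 3) * X ^ 3 - C (3 * r ^ 3) * X ^ 4
      + C (3 * r ^ 3) * X ^ 5 - C (r ^ 3) * X ^ 6 := by
    rw [hF]; simp only [map_mul, map_pow, map_ofNat]; ring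
  have hF2_2 : (F ^ 2).coeff 2 = r ^ 2 := by
    rw [hF2]
    simp only [Polynomial.coeff_add, Polynomial.coeff_sub, Polynomial.coeff_C_mul,
      Polynomial.coeff_X_pow]
    norm_num
  have hF2_3 : (F ^ 2).coeff 3 = -(2 * r ^ 2) := by
    rw [hF2]
    simp only [Polynomial.coeff_add, Polynomial.coeff_sub, Polynomial.coeff_C_mul,
      Polynomial.coeff_X_pow]
    norm_num
  have hF3_3 : (F ^ 3).coeff 3 = r ^ 3 := by
    rw [hF3]
    simp only [Polynomial.coeff_add, Polynomial.coeff_sub, Polynomial.coeff_C_mul,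
      Polynomial.coeff_X_pow]
    norm_num
  have key : ∀ i : ℕ, (Fiter i).coeff 1 = r ^ i ∧
      (r - 1) * (Fiter i).coeff 2 = r ^ i - r ^ (2 * i) ∧
      (r ^ 3 - r ^ 2 - r + 1) * (Fiter i).coeff 3
        = 2 * r * r ^ i - 2 * (r + 1) * r ^ (2 * i) + 2 * r ^ (3 * i) := by
    intro i
    induction i with
    | zero => refine ⟨?_, ?_, ?_⟩ <;> simp [h0, Polynomial.coeff_X] <;> ring
    | succ i ih =>
      obtain ⟨ihA, ihB, ihC⟩ := ih
      have hc1 : (Fiter (i + 1)).coeff 1 = (Fiter i).coeff 1 * r := by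
        rw [hS i, aux_coeff_comp _ _ hF0]
        simp [Finset.sum_range_succ, hF1, Polynomial.coeff_one]
      have hc2 : (Fiter (i + 1)).coeff 2
          = (Fiter i).coeff 1 * (-r) + (Fiter i).coeff 2 * r ^ 2 := by
        rw [hS i, aux_coeff_comp _ _ hF0]
        simp [Finset.sum_range_succ, hF2c, hF2_2, Polynomial.coeff_one]
      have hc3 : (Fiter (i + 1)).coeff 3
          = (Fiter i).coeff 2 * (-(2 * r ^ 2)) + (Fiter i).coeff 3 * r ^ 3 := by
        rw [hS i, aux_coeff_comp _ _ hF0]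
        simp [Finset.sum_range_succ, hF3c, hF2_3, hF3_3, Polynomial.coeff_one]
      refine ⟨by rw [hc1, ihA]; ring, ?_, ?_⟩
      · rw [hc2, ihA]
        have e1 : r ^ (2 * (i + 1)) = r ^ (2 * i) * r ^ 2 := by ring
        rw [e1]
        linear_combination r ^ 2 * ihB
      · rw [hc3]
        have e1 : r ^ (2 * (i + 1)) = r ^ (2 * i) * r ^ 2 := by ring
        have e2 : r ^ (3 * (i + 1)) = r ^ (3 * i) * r ^ 3 := by ring
        rw [pow_succ, e1, e2]
        linear_combination (-(2 * r ^ 2)) * (r ^ 2 - 1) * ihB + r ^ 3 * ihC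
  intro i
  obtain ⟨hA, hB, hC⟩ := key i
  refine ⟨hA, fun h1 => ?_, fun h1 h2 => ?_⟩
  · rw [eq_div_iff (sub_ne_zero.mpr h1)]; linear_combination hB
  · have hr1 : r - 1 ≠ 0 := sub_ne_zero.mpr h1
    have hr2 : r + 1 ≠ 0 := fun h => h2 (by linear_combination h)
    have hden : r ^ 3 - r ^ 2 - r + 1 ≠ 0 := by
      have hne : (r - 1) ^ 2 * (r + 1) ≠ 0 := mul_ne_zero (pow_ne_zero 2 hr1) hr2
      intro h
      exact hne (by linear_combination h)
    rw [eq_div_iff hden]; linear_combination hC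
end

section
/- Let λ₀, λ₁ ∈ ℂ be nonzero with |λ₀| ≠ 1, and set q = log |λ₁| / log |λ₀|. Assume that q is irrational, or that arg(λ₁) − arg(λ₀)·q ≠ 0 and π / (arg(λ₁) − arg(λ₀)·q) is irrational. Then the map from ℕ × ℕ to ℂ sending (a₀, a₁) to λ₀^{a₀} · λ₁^{a₁} is injective; that is, all products λ₀^{a₀} λ₁^{a₁} over pairs of natural number exponents are pairwise distinct. -/
/-- Two-variable sufficient condition: for nonzero `λ₀, λ₁ ∈ ℂ` with
`|λ₀| ≠ 1` and `q = log |λ₁| / log |λ₀|`, if `q` is irrational, or if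
`arg λ₁ − arg λ₀ · q ≠ 0` and `π / (arg λ₁ − arg λ₀ · q)` is irrational, then all the
products `λ₀^{a₀} λ₁^{a₁}` over natural exponents are pairwise distinct. -/
theorem two_variable_eigenvalue_products_injective (l0 l1 : ℂ)
    (h0 : l0 ≠ 0) (h1 : l1 ≠ 0) (habs : ‖l0‖ ≠ 1)
    (q : ℝ) (hq : q = Real.log ‖l1‖ / Real.log ‖l0‖)
    (h : Irrational q ∨
      (Complex.arg l1 - Complex.arg l0 * q ≠ 0 ∧
        Irrational (Real.pi / (Complex.arg l1 - Complex.arg l0 * q)))) :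
    Function.Injective (fun a : ℕ × ℕ => l0 ^ a.1 * l1 ^ a.2) := by
  intro a b heq
  simp only at heq
  set m : ℤ := (a.1 : ℤ) - b.1 with hm_def
  set n : ℤ := (a.2 : ℤ) - b.2 with hn_def
  have hz : l0 ^ m * l1 ^ n = 1 := by
    have h' : l0 ^ (a.1 : ℤ) * l1 ^ (a.2 : ℤ) = l0 ^ (b.1 : ℤ) * l1 ^ (b.2 : ℤ) := by
      simpa [zpow_natCast] using heq
    rw [hm_def, hn_def, zpow_sub₀ h0, zpow_sub₀ h1, div_mul_div_comm, div_eq_one_iff_eq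
      (mul_ne_zero (zpow_ne_zero _ h0) (zpow_ne_zero _ h1))]
    exact h'
  have e0 : l0 ^ m = Complex.exp ((m : ℂ) * Complex.log l0) := by
    rw [Complex.exp_int_mul, Complex.exp_log h0]
  have e1 : l1 ^ n = Complex.exp ((n : ℂ) * Complex.log l1) := by
    rw [Complex.exp_int_mul, Complex.exp_log h1]
  rw [e0, e1, ← Complex.exp_add] at hz
  obtain ⟨k, hk⟩ := Complex.exp_eq_one_iff.mp hz
  have hre : (m : ℝ) * Real.log ‖l0‖ + n * Real.log ‖l1‖ = 0 := by
    have := congrArg Complex.re hk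
    simpa [Complex.add_re, Complex.mul_re, Complex.log_re, Complex.log_im] using this
  have him : (m : ℝ) * Complex.arg l0 + n * Complex.arg l1 = k * (2 * Real.pi) := by
    have := congrArg Complex.im hk
    simpa [Complex.add_im, Complex.mul_im, Complex.log_re, Complex.log_im] using this
  have habs0 : ‖l0‖ ≠ 0 := by simpa using h0
  have hL0 : Real.log ‖l0‖ ≠ 0 := by
    intro hc
    rcases Real.log_eq_zero.mp hc with h' | h' | h'
    · exact habs0 h'
    · exact habs h'
    · have := norm_nonneg l0; linarith
  have hL1 : Real.log ‖l1‖ = q * Real.log ‖l0‖ := by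
    rw [hq]; field_simp
  have hmn : (m : ℝ) + n * q = 0 := by
    have h2 : ((m : ℝ) + n * q) * Real.log ‖l0‖ = 0 := by
      rw [hL1] at hre; ring_nf; ring_nf at hre; linarith
    exact (mul_eq_zero.mp h2).resolve_right hL0
  have hn : n = 0 := by
    by_contra hn
    have hnR : (n : ℝ) ≠ 0 := Int.cast_ne_zero.mpr hn
    have hqval : q = (-m : ℝ) / n := by field_simp; linarith
    rcases h with hirr | ⟨hD, hirr⟩
    · exact hirr ⟨(-m : ℚ) / n, by rw [hqval]; push_cast; ring⟩
    · set D := Complex.arg l1 - Complex.arg l0 * q with hD_def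
      have hnD : (n : ℝ) * D = k * (2 * Real.pi) := by
        rw [hD_def, hqval]
        field_simp
        ring_nf
        ring_nf at him
        nlinarith [him]
      have hk0 : (k : ℝ) ≠ 0 := by
        intro hc
        rw [hc] at hnD
        simp only [zero_mul] at hnD
        exact hD ((mul_eq_zero.mp hnD).resolve_left hnR)
      have : Real.pi / D = (n : ℝ) / (2 * k) := by
        rw [div_eq_div_iff hD (mul_ne_zero two_ne_zero hk0)]
        nlinarith [hnD]
      exact hirr ⟨(n : ℚ) / (2 * k), by rw [this]; push_cast; ring⟩
  have hm : m = 0 := by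
    have : (m : ℝ) = 0 := by rw [hn] at hmn; simpa using hmn
    exact_mod_cast this
  have h1' : a.1 = b.1 := by omega
  have h2' : a.2 = b.2 := by omega
  exact Prod.ext h1' h2'
end

section
/- Let k ≥ 1 and let F : Fin k → MvPolynomial (Fin k) ℂ be polynomials such that: each F p has vanishing constant coefficient; and the linear coefficient array is upper triangular, i.e. the coefficient of X_l in F p is zero whenever l < p. Let λ p denote the coefficient of X_p in F p. Then for every finitely supported exponent vector d : Fin k →₀ ℕ, the coefficient of the monomial X^d = ∏_p X_p^{d p} in the product ∏_{p} (F p)^{d p} equals ∏_{p} (λ p)^{d p}. (The diagonal entries of the upper triangular multi-variable Carleman transition matrix are the products of powers of the eigenvalues of the linear part.) -/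
open Finset

namespace CarlemanAux

variable {k : ℕ}

/-- total degree of an exponent vector -/
def ow (e : Fin k →₀ ℕ) : ℕ := ∑ i : Fin k, e i

/-- weighted degree of an exponent vector -/
def ov (e : Fin k →₀ ℕ) : ℕ := ∑ i : Fin k, (i : ℕ) * e i

lemma ow_add (a b : Fin k →₀ ℕ) : ow (a + b) = ow a + ow b := by
  simp [ow, Finsupp.add_apply, Finset.sum_add_distrib]

lemma ov_add (a b : Fin k →₀ ℕ) : ov (a + b) = ov a + ov b := by
  simp [ov, Finsupp.add_apply, mul_add, Finset.sum_add_distrib]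

lemma ow_single (l : Fin k) : ow (Finsupp.single l 1) = 1 := by
  simp [ow, Finsupp.single_apply]

lemma ov_single (l : Fin k) : ov (Finsupp.single l 1) = (l : ℕ) := by
  simp [ov, Finsupp.single_apply, mul_ite]

lemma eq_zero_of_ow (e : Fin k →₀ ℕ) (h : ow e = 0) : e = 0 := by
  have := (Finset.sum_eq_zero_iff (s := (Finset.univ : Finset (Fin k)))
    (f := fun i => e i)).mp h
  ext j
  exact this j (Finset.mem_univ j)

lemma exists_single_of_ow (e : Fin k →₀ ℕ) (h : ow e = 1) :
    ∃ l, e = Finsupp.single l 1 := by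
  have hne : ∃ i, e i ≠ 0 := by
    by_contra hc
    push_neg at hc
    have : ow e = 0 := by simp [ow, hc]
    omega
  obtain ⟨i, hi⟩ := hne
  have h' : ∑ j : Fin k, e j = 1 := h
  have hle : e i ≤ ∑ j : Fin k, e j :=
    Finset.single_le_sum (fun _ _ => Nat.zero_le _) (Finset.mem_univ i)
  have htot : e i + ∑ j ∈ Finset.univ.erase i, e j = ∑ j : Fin k, e j :=
    Finset.add_sum_erase Finset.univ (fun j => e j) (Finset.mem_univ i)
  have hei : e i = 1 := by omega
  have hrest : ∑ j ∈ Finset.univ.erase i, e j = 0 := by omega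
  refine ⟨i, ?_⟩
  ext j
  rcases eq_or_ne j i with rfl | hji
  · simp [hei, Finsupp.single_apply]
  · have : e j = 0 :=
      (Finset.sum_eq_zero_iff.mp hrest) j (Finset.mem_erase.mpr ⟨hji, Finset.mem_univ j⟩)
    simp [this, Finsupp.single_apply, Ne.symm hji]

/-- `P` has lex-minimal monomial `m` (graded, then weight) with coefficient `c`. -/
def Good (P : MvPolynomial (Fin k) ℂ) (m : Fin k →₀ ℕ) (c : ℂ) : Prop :=
  (∀ e, MvPolynomial.coeff e P ≠ 0 → e ≠ m →
      ow m < ow e ∨ (ow m = ow e ∧ ov m < ov e)) ∧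
  MvPolynomial.coeff m P = c

lemma good_one : Good (1 : MvPolynomial (Fin k) ℂ) 0 1 := by
  constructor
  · intro e he hne
    rw [MvPolynomial.coeff_one] at he
    simp only [ne_eq, ite_eq_right_iff, not_forall] at he
    exact absurd he.1.symm hne
  · simp [MvPolynomial.coeff_one]

lemma good_mul {P Q : MvPolynomial (Fin k) ℂ} {m n : Fin k →₀ ℕ} {c b : ℂ}
    (hP : Good P m c) (hQ : Good Q n b) : Good (P * Q) (m + n) (c * b) := by
  constructor
  · intro e he hne
    rw [MvPolynomial.coeff_mul] at he
    obtain ⟨x, hx, hterm⟩ := Finset.exists_ne_zero_of_sum_ne_zero he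
    have hsum : x.1 + x.2 = e := Finset.HasAntidiagonal.mem_antidiagonal.mp hx
    have hx1 : MvPolynomial.coeff x.1 P ≠ 0 := fun h => hterm (by rw [h, zero_mul])
    have hx2 : MvPolynomial.coeff x.2 Q ≠ 0 := fun h => hterm (by rw [h, mul_zero])
    have howe : ow e = ow x.1 + ow x.2 := by rw [← hsum, ow_add]
    have hove : ov e = ov x.1 + ov x.2 := by rw [← hsum, ov_add]
    rw [ow_add, ov_add]
    rcases eq_or_ne x.1 m with h1 | h1
    · rcases eq_or_ne x.2 n with h2 | h2
      · exact absurd (by rw [← hsum, h1, h2]) hne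
      · have hB := hQ.1 x.2 hx2 h2
        have e1 : ow x.1 = ow m := by rw [h1]
        have e2 : ov x.1 = ov m := by rw [h1]
        omega
    · have hA := hP.1 x.1 hx1 h1
      rcases eq_or_ne x.2 n with h2 | h2
      · have e1 : ow x.2 = ow n := by rw [h2]
        have e2 : ov x.2 = ov n := by rw [h2]
        omega
      · have hB := hQ.1 x.2 hx2 h2
        omega
  · have hzero : ∀ x ∈ Finset.HasAntidiagonal.antidiagonal (m + n),
        x ≠ (m, n) → MvPolynomial.coeff x.1 P * MvPolynomial.coeff x.2 Q = 0 := by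
      intro x hx hxne
      by_contra hne0
      have hsum : x.1 + x.2 = m + n := Finset.HasAntidiagonal.mem_antidiagonal.mp hx
      have hx1 : MvPolynomial.coeff x.1 P ≠ 0 := fun h => hne0 (by rw [h, zero_mul])
      have hx2 : MvPolynomial.coeff x.2 Q ≠ 0 := fun h => hne0 (by rw [h, mul_zero])
      have howe : ow x.1 + ow x.2 = ow m + ow n := by
        rw [← ow_add, ← ow_add, hsum]
      have hove : ov x.1 + ov x.2 = ov m + ov n := by
        rw [← ov_add, ← ov_add, hsum]
      rcases eq_or_ne x.1 m with h1 | h1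
      · rcases eq_or_ne x.2 n with h2 | h2
        · exact hxne (Prod.ext h1 h2)
        · have hB := hQ.1 x.2 hx2 h2
          have e1 : ow x.1 = ow m := by rw [h1]
          have e2 : ov x.1 = ov m := by rw [h1]
          omega
      · have hA := hP.1 x.1 hx1 h1
        rcases eq_or_ne x.2 n with h2 | h2
        · have e1 : ow x.2 = ow n := by rw [h2]
          have e2 : ov x.2 = ov n := by rw [h2]
          omega
        · have hB := hQ.1 x.2 hx2 h2
          omega
    rw [MvPolynomial.coeff_mul,
      Finset.sum_eq_single_of_mem (m, n) (Finset.HasAntidiagonal.mem_antidiagonal.mpr rfl) hzero,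
      hP.2, hQ.2]

lemma good_pow {P : MvPolynomial (Fin k) ℂ} {m : Fin k →₀ ℕ} {c : ℂ}
    (hP : Good P m c) (n : ℕ) : Good (P ^ n) (n • m) (c ^ n) := by
  induction n with
  | zero => simpa using good_one
  | succ n ih =>
      rw [pow_succ, pow_succ, succ_nsmul]
      exact good_mul ih hP

lemma good_prod {ι : Type*} (s : Finset ι) (P : ι → MvPolynomial (Fin k) ℂ)
    (m : ι → Fin k →₀ ℕ) (c : ι → ℂ) (h : ∀ i ∈ s, Good (P i) (m i) (c i)) :
    Good (∏ i ∈ s, P i) (∑ i ∈ s, m i) (∏ i ∈ s, c i) := by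
  classical
  induction s using Finset.induction with
  | empty => simpa using good_one
  | @insert a s ha ih =>
      rw [Finset.prod_insert ha, Finset.sum_insert ha, Finset.prod_insert ha]
      exact good_mul (h a (Finset.mem_insert_self a s))
        (ih fun i hi => h i (Finset.mem_insert_of_mem hi))

end CarlemanAux

open CarlemanAux

/-- Diagonal entries of the upper triangular multi-variable Carleman
transition matrix: if each `F p` has vanishing constant coefficient and the linear
coefficient array is upper triangular (the coefficient of `X_l` in `F p` vanishes for
`l < p`), and `λ p` is the coefficient of `X_p` in `F p`, then the coefficient of the
monomial `X^d` in `∏ p, (F p)^(d p)` equals `∏ p, (λ p)^(d p)`. -/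
theorem multivariable_carleman_diagonal_entries
    (k : ℕ) (hk : 1 ≤ k) (F : Fin k → MvPolynomial (Fin k) ℂ)
    (h0 : ∀ p, MvPolynomial.constantCoeff (F p) = 0)
    (htri : ∀ p l : Fin k, l < p →
      MvPolynomial.coeff (Finsupp.single l 1) (F p) = 0)
    (lam : Fin k → ℂ)
    (hlam : ∀ p, lam p = MvPolynomial.coeff (Finsupp.single p 1) (F p))
    (d : Fin k →₀ ℕ) :
    MvPolynomial.coeff d (∏ p, (F p) ^ d p) = ∏ p, lam p ^ d p := by
  have goodF : ∀ p, Good (F p) (Finsupp.single p 1) (lam p) := by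
    intro p
    constructor
    · intro e he hne
      have hcase : ow e = 0 ∨ ow e = 1 ∨ 2 ≤ ow e := by omega
      rcases hcase with howe | howe | howe
      · obtain rfl := eq_zero_of_ow e howe
        exact absurd (by
          rw [← MvPolynomial.constantCoeff_eq]; exact h0 p) he
      · obtain ⟨l, rfl⟩ := exists_single_of_ow e howe
        have hlp : l ≠ p := fun h => hne (by rw [h])
        rcases lt_or_gt_of_ne hlp with hl | hl
        · exact absurd (htri p l hl) he
        · right
          refine ⟨by simp [ow_single], ?_⟩
          rw [ov_single, ov_single]
          exact_mod_cast hl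
      · left
        rw [ow_single]
        omega
    · exact (hlam p).symm
  have key := good_prod (k := k) Finset.univ (fun p => F p ^ d p)
    (fun p => d p • Finsupp.single p 1) (fun p => lam p ^ d p)
    (fun p _ => good_pow (goodF p) (d p))
  have hdsum : (∑ p, d p • Finsupp.single p 1) = d := by
    ext j
    rw [Finsupp.finset_sum_apply]
    simp [Finsupp.single_apply]
  rw [hdsum] at key
  exact key.2
end
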